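/- Let x ∈ G and n ≥ 1 be such that xⁿ ∈ N, and let S be an intertwining operator for π^x satisfying the normalization π(xⁿ) ∘ Sⁿ = id_V. Then for every h ∈ N the operator π(h⁻¹) ∘ S satisfies π((xh)ⁿ) ∘ (π(h⁻¹) ∘ S)ⁿ = id_V, and for every g ∈ N the operator S ∘ π(g⁻¹) satisfies π((gx)ⁿ) ∘ (S ∘ π(g⁻¹))ⁿ = id_V. (Note that (xh)ⁿ and (gx)ⁿ lie in N since N is normal and xⁿ ∈ N.) -/
import Mathlib


/-- Let `N` be a normal subgroup of `G`, `(π, V)` a representation of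
`N` on a complex vector space, `x ∈ G` and `n ≥ 1` with `xⁿ ∈ N`, and let `S` be an
intertwining operator for `π^x` with `π(xⁿ) ∘ Sⁿ = id`. Then for every `h ∈ N`,
`π((xh)ⁿ) ∘ (π(h⁻¹) ∘ S)ⁿ = id`, and for every `g ∈ N`,
`π((gx)ⁿ) ∘ (S ∘ π(g⁻¹))ⁿ = id` (the elements `(xh)ⁿ` and `(gx)ⁿ` lie in `N`). -/
theorem normalization_transfers {G : Type*} [Group G] (N : Subgroup G) (hN : N.Normal)
    {V : Type*} [AddCommGroup V] [Module ℂ V]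
    (π : Representation ℂ ↥N V) (x : G) (n : ℕ) (hn : 1 ≤ n) (hxn : x ^ n ∈ N)
    (S : (Module.End ℂ V)ˣ)
    (hS : ∀ g g' : ↥N, (↑g' : G) = x⁻¹ * ↑g * x →
      π g' * (↑S : Module.End ℂ V) = (↑S : Module.End ℂ V) * π g)
    (hnorm : π ⟨x ^ n, hxn⟩ * (↑S : Module.End ℂ V) ^ n = 1) :
    (∀ (h : ↥N) (p : ↥N), (↑p : G) = (x * ↑h) ^ n →
        π p * (π h⁻¹ * (↑S : Module.End ℂ V)) ^ n = 1) ∧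
    (∀ (g : ↥N) (p : ↥N), (↑p : G) = (↑g * x) ^ n →
        π p * ((↑S : Module.End ℂ V) * π g⁻¹) ^ n = 1) := by
  -- moving a power of `S` past π g
  have key : ∀ (k : ℕ) (g g' : ↥N), (↑g' : G) = x⁻¹ ^ k * ↑g * x ^ k →
      π g' * (↑S : Module.End ℂ V) ^ k = (↑S : Module.End ℂ V) ^ k * π g := by
    intro k
    induction k with
    | zero =>
      intro g g' hg
      have : g' = g := by
        apply Subtype.ext; simpa using hg
      subst this; simp
    | succ k ih =>
      intro g g' hg
      have hmem : x⁻¹ * ↑g * x ∈ N := by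
        have := hN.conj_mem (↑g) g.2 x⁻¹
        simpa using this
      set g₀ : ↥N := ⟨x⁻¹ * ↑g * x, hmem⟩ with hg₀
      have h1 : (↑g' : G) = x⁻¹ ^ k * ↑g₀ * x ^ k := by
        show (↑g' : G) = x⁻¹ ^ k * (x⁻¹ * ↑g * x) * x ^ k
        rw [hg]; group
      have h2 := ih g₀ g' h1
      have h3 := hS g g₀ rfl
      calc π g' * (↑S : Module.End ℂ V) ^ (k + 1)
          = (π g' * (↑S : Module.End ℂ V) ^ k) * ↑S := by rw [pow_succ, mul_assoc]
        _ = (↑S : Module.End ℂ V) ^ k * (π g₀ * ↑S) := by rw [h2, mul_assoc]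
        _ = (↑S : Module.End ℂ V) ^ k * (↑S * π g) := by rw [h3]
        _ = (↑S : Module.End ℂ V) ^ (k + 1) * π g := by rw [pow_succ, mul_assoc]
  -- key expansion of the twisted power
  have main : ∀ (h : ↥N) (k : ℕ) (a : ↥N), (↑a : G) = ((x * ↑h)⁻¹) ^ k * x ^ k →
      (π h⁻¹ * (↑S : Module.End ℂ V)) ^ k = π a * (↑S : Module.End ℂ V) ^ k := by
    intro h k
    induction k with
    | zero =>
      intro a ha
      have : a = 1 := by apply Subtype.ext; simpa using ha
      subst this; simp
    | succ k ih =>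
      intro a ha
      have hbmem : x⁻¹ ^ k * ↑h * x ^ k ∈ N := by
        have := hN.conj_mem (↑h) h.2 (x⁻¹ ^ k)
        simpa [inv_pow] using this
      set b : ↥N := ⟨x⁻¹ ^ k * ↑h * x ^ k, hbmem⟩ with hb
      have h1 : (↑(a * b) : G) = ((x * ↑h)⁻¹) ^ k * x ^ k := by
        push_cast
        show (↑a : G) * (x⁻¹ ^ k * ↑h * x ^ k) = _
        rw [ha, inv_pow, inv_pow, inv_pow, pow_succ', pow_succ', mul_inv_rev, mul_inv_rev]
        simp only [mul_assoc, inv_mul_cancel_left, mul_inv_cancel_left]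
      have h2 := ih (a * b) h1
      have h3 : (↑(b⁻¹) : G) = x⁻¹ ^ k * ↑(h⁻¹) * x ^ k := by
        push_cast
        show (x⁻¹ ^ k * ↑h * x ^ k)⁻¹ = _
        group
      have h4 := key k h⁻¹ b⁻¹ h3
      calc (π h⁻¹ * (↑S : Module.End ℂ V)) ^ (k + 1)
          = (π h⁻¹ * ↑S) ^ k * (π h⁻¹ * ↑S) := by rw [pow_succ]
        _ = π (a * b) * ((↑S : Module.End ℂ V) ^ k * π h⁻¹) * ↑S := by
            rw [h2]; simp only [mul_assoc]
        _ = π (a * b) * (π b⁻¹ * (↑S : Module.End ℂ V) ^ k) * ↑S := by rw [← h4]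
        _ = (π (a * b) * π b⁻¹) * (↑S : Module.End ℂ V) ^ (k + 1) := by
            rw [pow_succ]; simp only [mul_assoc]
        _ = π a * (↑S : Module.End ℂ V) ^ (k + 1) := by
            rw [← map_mul, mul_inv_cancel_right]
  have first : ∀ (h : ↥N) (p : ↥N), (↑p : G) = (x * ↑h) ^ n →
      π p * (π h⁻¹ * (↑S : Module.End ℂ V)) ^ n = 1 := by
    intro h p hp
    set a : ↥N := p⁻¹ * ⟨x ^ n, hxn⟩ with haa
    have ha : (↑a : G) = ((x * ↑h)⁻¹) ^ n * x ^ n := by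
      show (↑p : G)⁻¹ * x ^ n = _
      rw [hp, inv_pow]
    rw [main h n a ha, ← mul_assoc, ← map_mul]
    have : p * a = ⟨x ^ n, hxn⟩ := by rw [haa, mul_inv_cancel_left]
    rw [this, hnorm]
  refine ⟨first, ?_⟩
  intro g p hp
  have hmem : x⁻¹ * ↑g * x ∈ N := by
    have := hN.conj_mem (↑g) g.2 x⁻¹
    simpa using this
  set h : ↥N := ⟨x⁻¹ * ↑g * x, hmem⟩ with hh
  have h3 : (↑(h⁻¹) : G) = x⁻¹ * ↑(g⁻¹) * x := by
    push_cast
    show (x⁻¹ * ↑g * x)⁻¹ = _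
    group
  have h4 := hS g⁻¹ h⁻¹ h3
  have hp' : (↑p : G) = (x * ↑h) ^ n := by
    show (↑p : G) = (x * (x⁻¹ * ↑g * x)) ^ n
    rw [hp]; group
  have := first h p hp'
  rwa [h4] at this
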